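/- arXiv:1111.0801 — 2 statements merged into one kernel-verified Lean document; each statement's English description precedes it below -/
import Mathlib

section
/- Let n, m, d be positive integers with d ≤ n, m ≥ n, and suppose n is large enough that log(log n) ≥ 2 (natural logarithm). Let X be a binomial random variable with m trials and success probability d/n. Then P(X > (m·d/n)·log n) < 1/(e·n). -/
/-- **High-probability part of Lemma 1.**
Let `n, m, d` be positive integers with `d ≤ n`, `m ≥ n`, and `n` large enough that
`log (log n) ≥ 2` (natural logarithm). If `X` is binomially distributed with `m` trials
and success probability `d/n`, then `P(X > (m·d/n)·log n) < 1/(e·n)`. -/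
theorem stmt1 (n m d : ℕ) (hn : 0 < n) (hd : 0 < d) (hdn : d ≤ n) (hmn : n ≤ m)
    (hlog : 2 ≤ Real.log (Real.log n)) :
    ∑ k ∈ Finset.range (m + 1),
        (if (m : ℝ) * d / n * Real.log n < (k : ℝ) then
          (m.choose k : ℝ) * ((d : ℝ) / n) ^ k * (1 - (d : ℝ) / n) ^ (m - k) else 0)
      < 1 / (Real.exp 1 * n) := by
  have hn' : (0:ℝ) < n := by exact_mod_cast hn
  have hm0 : 0 < m := lt_of_lt_of_le hn hmn
  have hm' : (0:ℝ) < m := by exact_mod_cast hm0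
  have hn1 : (1:ℝ) ≤ n := by exact_mod_cast hn
  set L := Real.log n with hLdef
  have hLnn : 0 ≤ L := Real.log_nonneg hn1
  have hL1 : 1 < L := by
    by_contra h
    push_neg at h
    have : Real.log L ≤ 0 := Real.log_nonpos hLnn h
    linarith
  have hLpos : 0 < L := by linarith
  set s := Real.log L with hsdef
  have hs2 : (2:ℝ) ≤ s := hlog
  have hes : Real.exp s = L := Real.exp_log hLpos
  have hspos : 0 < s := by linarith
  set p : ℝ := (d:ℝ)/n with hpdef
  have hp0 : 0 ≤ p := by positivity
  have hp1 : p ≤ 1 := by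
    rw [hpdef, div_le_one hn']
    exact_mod_cast hdn
  have hμ : (1:ℝ) ≤ (m:ℝ) * p := by
    rw [hpdef, mul_div_assoc', le_div_iff₀ hn', one_mul]
    have : (n:ℝ) * 1 ≤ (m:ℝ) * d := by
      apply mul_le_mul
      · exact_mod_cast hmn
      · exact_mod_cast hd
      · norm_num
      · positivity
    simpa using this
  have hT : (m:ℝ) * d / n * L = (m:ℝ) * p * L := by
    rw [hpdef]; ring
  set T : ℝ := (m:ℝ) * p * L with hTdef
  have hTpos : 0 < T := by nlinarith
  simp only [hT]
  by_cases hdeq : d = n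
  · -- p = 1, threshold is m*L ≥ m ≥ every k, so the sum is 0
    have hp : p = 1 := by rw [hpdef, hdeq, div_self (ne_of_gt hn')]
    have hsum : (∑ k ∈ Finset.range (m + 1),
        (if T < (k : ℝ) then
          (m.choose k : ℝ) * p ^ k * (1 - p) ^ (m - k) else 0)) = 0 := by
      apply Finset.sum_eq_zero
      intro k hk
      rw [if_neg]
      push_neg
      have hk' : (k:ℝ) ≤ m := by
        exact_mod_cast Nat.le_of_lt_succ (Finset.mem_range.mp hk)
      rw [hTdef, hp]
      nlinarith
    rw [hsum]
    positivity
  · -- p < 1 : Chernoff bound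
    have hplt : p < 1 := by
      rw [hpdef, div_lt_one hn']
      exact_mod_cast lt_of_le_of_ne hdn hdeq
    have h1p : 0 < 1 - p := by linarith
    set g : ℕ → ℝ := fun k =>
      (p * Real.exp s) ^ k * (1 - p) ^ (m - k) * (m.choose k : ℝ) * Real.exp (-(s * T))
      with hgdef
    have hstep1 : (∑ k ∈ Finset.range (m + 1),
        (if T < (k : ℝ) then
          (m.choose k : ℝ) * p ^ k * (1 - p) ^ (m - k) else 0))
        < ∑ k ∈ Finset.range (m + 1), g k := by
      apply Finset.sum_lt_sum
      · intro k hk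
        split_ifs with h
        · -- T < k : term ≤ term * exp(s k - s T)
          have hone : (1:ℝ) ≤ Real.exp (s * k) * Real.exp (-(s * T)) := by
            rw [← Real.exp_add]
            apply Real.one_le_exp
            nlinarith
          have : (m.choose k : ℝ) * p ^ k * (1 - p) ^ (m - k)
              ≤ ((m.choose k : ℝ) * p ^ k * (1 - p) ^ (m - k)) *
                (Real.exp (s * k) * Real.exp (-(s * T))) := by
            apply le_mul_of_one_le_right (by positivity) hone
          calc (m.choose k : ℝ) * p ^ k * (1 - p) ^ (m - k)
              ≤ ((m.choose k : ℝ) * p ^ k * (1 - p) ^ (m - k)) *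
                (Real.exp (s * k) * Real.exp (-(s * T))) := this
            _ = g k := by
                rw [hgdef]
                simp only [mul_pow]
                rw [← Real.exp_nat_mul]
                ring_nf
        · rw [hgdef]
          positivity
      · refine ⟨0, Finset.mem_range.mpr (Nat.succ_pos m), ?_⟩
        rw [if_neg (by push_neg; exact_mod_cast hTpos.le)]
        rw [hgdef]
        simp only [pow_zero, Nat.sub_zero, Nat.choose_zero_right, Nat.cast_one, one_mul, mul_one]
        positivity
    have hstep2 : (∑ k ∈ Finset.range (m + 1), g k)
        = (p * Real.exp s + (1 - p)) ^ m * Real.exp (-(s * T)) := by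
      rw [hgdef]
      rw [add_pow, ← Finset.sum_mul]
    have hstep3 : (p * Real.exp s + (1 - p)) ^ m ≤ Real.exp ((m:ℝ) * (p * (Real.exp s - 1))) := by
      have hb : p * Real.exp s + (1 - p) = 1 + p * (Real.exp s - 1) := by ring
      have hx0 : 0 ≤ p * (Real.exp s - 1) := by
        apply mul_nonneg hp0
        rw [hes]; linarith
      have hle : p * Real.exp s + (1 - p) ≤ Real.exp (p * (Real.exp s - 1)) := by
        rw [hb]
        have := Real.add_one_le_exp (p * (Real.exp s - 1))
        linarith
      calc (p * Real.exp s + (1 - p)) ^ m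
          ≤ (Real.exp (p * (Real.exp s - 1))) ^ m :=
            pow_le_pow_left₀ (by linarith) hle m
        _ = Real.exp ((m:ℝ) * (p * (Real.exp s - 1))) := by
            rw [← Real.exp_nat_mul]
    have hstep4 : Real.exp ((m:ℝ) * (p * (Real.exp s - 1))) * Real.exp (-(s * T))
        ≤ 1 / (Real.exp 1 * n) := by
      rw [← Real.exp_add]
      have hexp : (m:ℝ) * (p * (Real.exp s - 1)) + -(s * T) ≤ -1 - L := by
        rw [hes, hTdef]
        nlinarith [mul_pos hLpos hspos, hμ, hs2, hLpos]
      calc Real.exp ((m:ℝ) * (p * (Real.exp s - 1)) + -(s * T))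
          ≤ Real.exp (-1 - L) := Real.exp_le_exp.mpr hexp
        _ = 1 / (Real.exp 1 * n) := by
            rw [show (-1 - L : ℝ) = -1 + -L by ring, Real.exp_add, Real.exp_neg,
              Real.exp_neg, hLdef, Real.exp_log hn']
            field_simp
    calc (∑ k ∈ Finset.range (m + 1),
        (if T < (k : ℝ) then
          (m.choose k : ℝ) * p ^ k * (1 - p) ^ (m - k) else 0))
        < ∑ k ∈ Finset.range (m + 1), g k := hstep1
      _ = (p * Real.exp s + (1 - p)) ^ m * Real.exp (-(s * T)) := hstep2
      _ ≤ Real.exp ((m:ℝ) * (p * (Real.exp s - 1))) * Real.exp (-(s * T)) := by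
          apply mul_le_mul_of_nonneg_right hstep3 (le_of_lt (Real.exp_pos _))
      _ ≤ 1 / (Real.exp 1 * n) := hstep4
end

section
/- Let n, c, d, γ be natural numbers with n ≥ 2, d ≥ 1, γ ≥ 1 and c ≤ n, and let ε ∈ (0, 1] and φ > 0 be real numbers. If c ≤ n^{1−ε} (real power) and γ·d·ε ≥ φ, then (C(c, d) / C(n, d))^γ ≤ n^{−φ}, where the left-hand side is a real number computed from the binomial coefficients C(a,b) = 'a choose b'. -/
lemma stmt8_desc (c n : ℕ) (hc : c ≤ n) :
    ∀ d, c.descFactorial d * n ^ d ≤ n.descFactorial d * c ^ d := by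
  intro d
  induction d with
  | zero => simp
  | succ d ih =>
    have h1 : (c - d) * n ≤ (n - d) * c := by
      rw [Nat.sub_mul, Nat.sub_mul, Nat.mul_comm c n]
      exact Nat.sub_le_sub_left (Nat.mul_le_mul_left d hc) (n * c)
    calc c.descFactorial (d + 1) * n ^ (d + 1)
        = (c - d) * n * (c.descFactorial d * n ^ d) := by
          rw [Nat.descFactorial_succ]; ring
      _ ≤ (n - d) * c * (n.descFactorial d * c ^ d) := Nat.mul_le_mul h1 ih
      _ = n.descFactorial (d + 1) * c ^ (d + 1) := by
          rw [Nat.descFactorial_succ]; ring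

lemma stmt8_choose (c n d : ℕ) (hc : c ≤ n) :
    c.choose d * n ^ d ≤ n.choose d * c ^ d := by
  have h := stmt8_desc c n hc d
  rw [Nat.descFactorial_eq_factorial_mul_choose, Nat.descFactorial_eq_factorial_mul_choose]
    at h
  have h' : d.factorial * (c.choose d * n ^ d) ≤ d.factorial * (n.choose d * c ^ d) := by
    calc d.factorial * (c.choose d * n ^ d) = d.factorial * c.choose d * n ^ d := by ring
      _ ≤ d.factorial * n.choose d * c ^ d := h
      _ = d.factorial * (n.choose d * c ^ d) := by ring
  exact Nat.le_of_mul_le_mul_left h' d.factorial_pos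

/-- **Quantitative content of Lemma 5.**
Let `n, c, d, γ` be naturals with `n ≥ 2`, `d ≥ 1`, `γ ≥ 1`, `c ≤ n`, and let
`ε ∈ (0,1]` and `φ > 0` be reals. If `c ≤ n^(1−ε)` (real power) and `γ·d·ε ≥ φ`, then
`(C(c,d)/C(n,d))^γ ≤ n^(−φ)` (as real numbers, the right-hand side a real power). -/
theorem stmt8 (n c d γ : ℕ) (hn : 2 ≤ n) (hd : 1 ≤ d) (hγ : 1 ≤ γ) (hc : c ≤ n)
    (ε φ : ℝ) (hε0 : 0 < ε) (hε1 : ε ≤ 1) (hφ : 0 < φ)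
    (hcn : (c : ℝ) ≤ (n : ℝ) ^ ((1 : ℝ) - ε)) (hγdε : φ ≤ (γ : ℝ) * d * ε) :
    ((c.choose d : ℝ) / (n.choose d : ℝ)) ^ γ ≤ (n : ℝ) ^ (-φ) := by
  have hn0 : (0 : ℝ) < n := by positivity
  have hn1 : (1 : ℝ) < n := by exact_mod_cast hn
  -- step 1 : ratio ≤ (c/n)^d
  have hratio : (c.choose d : ℝ) / (n.choose d : ℝ) ≤ ((c : ℝ) / n) ^ d := by
    rcases le_or_gt d n with hdn | hdn
    · have hch : (0 : ℝ) < (n.choose d : ℝ) := by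
        exact_mod_cast Nat.choose_pos hdn
      rw [div_pow, div_le_div_iff₀ hch (by positivity)]
      have := stmt8_choose c n d hc
      rw [mul_comm ((c:ℝ)^d) _]
      exact_mod_cast this
    · have h1 : c.choose d = 0 := Nat.choose_eq_zero_of_lt (lt_of_le_of_lt hc hdn)
      rw [h1]
      simp
      positivity
  -- step 2 : c/n ≤ n^(-ε)
  have hcn' : (c : ℝ) / n ≤ (n : ℝ) ^ (-ε) := by
    rw [div_le_iff₀ hn0]
    calc (c : ℝ) ≤ (n : ℝ) ^ ((1 : ℝ) - ε) := hcn
      _ = (n : ℝ) ^ (-ε) * n := by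
          rw [show (1 : ℝ) - ε = -ε + 1 by ring, Real.rpow_add hn0, Real.rpow_one]
  -- combine
  have h0 : (0 : ℝ) ≤ (c.choose d : ℝ) / (n.choose d : ℝ) := by positivity
  have h2 : ((c.choose d : ℝ) / (n.choose d : ℝ)) ^ γ ≤ ((n : ℝ) ^ (-ε)) ^ (d * γ) := by
    calc ((c.choose d : ℝ) / (n.choose d : ℝ)) ^ γ
        ≤ (((c : ℝ) / n) ^ d) ^ γ := by
          apply pow_le_pow_left₀ h0 hratio
      _ ≤ (((n : ℝ) ^ (-ε)) ^ d) ^ γ := by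
          apply pow_le_pow_left₀ (by positivity)
          exact pow_le_pow_left₀ (by positivity) hcn' d
      _ = ((n : ℝ) ^ (-ε)) ^ (d * γ) := by rw [← pow_mul]
  calc ((c.choose d : ℝ) / (n.choose d : ℝ)) ^ γ
      ≤ ((n : ℝ) ^ (-ε)) ^ (d * γ) := h2
    _ = (n : ℝ) ^ (-ε * (d * γ)) := by
        rw [← Real.rpow_natCast ((n : ℝ) ^ (-ε)) (d * γ), ← Real.rpow_mul hn0.le]
        push_cast
        ring_nf
    _ ≤ (n : ℝ) ^ (-φ) := by
        apply Real.rpow_le_rpow_of_exponent_le hn1.le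
        push_cast
        nlinarith
end
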